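/- (Reversible product measures for ASEP(q,j) on {1,...,L}) For q ∈ (0,1), j ∈ ℕ/2, α > 0, the product measure on {0,...,2j}^L with marginals P(η_i = n) = (α^n / Z_i) · binom(2j,n)_q · q^{2n(1+j-2ji)} satisfies detailed balance for the ASEP(q,j) generator: μ(η)·c(η,η^{i,i+1}) = μ(η^{i,i+1})·c(η^{i,i+1},η), where c(η,η^{i,i+1}) = q^{η_i - η_{i+1} - (2j+1)}[η_i]_q[2j-η_{i+1}]_q and c(η,η^{i+1,i}) = q^{η_i - η_{i+1} + (2j+1)}[2j-η_i]_q[η_{i+1}]_q. -/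

import Mathlib

/-- The q-number [n]_q = (q^n - q^{-n})/(q - q^{-1}). -/
noncomputable def qNum (q : ℝ) (n : ℕ) : ℝ := (q ^ n - q⁻¹ ^ n) / (q - q⁻¹)

/-- The q-factorial [n]_q!. -/
noncomputable def qFact (q : ℝ) (n : ℕ) : ℝ := ∏ k ∈ Finset.Icc 1 n, qNum q k

/-- The q-binomial coefficient. -/
noncomputable def qBinom (q : ℝ) (n k : ℕ) : ℝ := qFact q n / (qFact q k * qFact q (n - k))

/-- Normalization Z_i for the ASEP(q,j) marginal at site i (J = 2j). -/
noncomputable def Zconst (q α : ℝ) (J i : ℕ) : ℝ :=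
  ∑ n ∈ Finset.range (J + 1),
    qBinom q J n * α ^ n * q ^ ((n : ℤ) * (2 + (J : ℤ) - 2 * J * i))

/-- The marginal P(η_i = n) = (α^n/Z_i) binom(2j,n)_q q^{2n(1+j-2ji)}, with J = 2j. -/
noncomputable def marg (q α : ℝ) (J i n : ℕ) : ℝ :=
  α ^ n / Zconst q α J i * qBinom q J n * q ^ ((n : ℤ) * (2 + (J : ℤ) - 2 * J * i))

/-- Configuration obtained from η by moving one particle from site i to site i+1. -/
def moveR (η : ℕ → ℕ) (i : ℕ) : ℕ → ℕ :=
  fun k => if k = i then η i - 1 else if k = i + 1 then η (i + 1) + 1 else η k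

lemma qNum_pos {q : ℝ} (hq0 : 0 < q) (hq1 : q < 1) {k : ℕ} (hk : 1 ≤ k) : 0 < qNum q k := by
  have h1 : q ^ k < 1 := pow_lt_one₀ hq0.le hq1 (by omega)
  have h2 : 1 < q⁻¹ := one_lt_inv₀ hq0 |>.mpr hq1
  have h3 : 1 < q⁻¹ ^ k := one_lt_pow₀ h2 (by omega)
  have h4 : q < q⁻¹ := lt_trans hq1 h2
  exact div_pos_of_neg_of_neg (by linarith) (by linarith)

lemma qFact_pos {q : ℝ} (hq0 : 0 < q) (hq1 : q < 1) (n : ℕ) : 0 < qFact q n :=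
  Finset.prod_pos fun _ hk => qNum_pos hq0 hq1 (Finset.mem_Icc.mp hk).1

lemma qFact_succ (q : ℝ) (n : ℕ) : qFact q (n + 1) = qFact q n * qNum q (n + 1) :=
  Finset.prod_Icc_succ_top (by omega) _

lemma qBinom_succ_mul {q : ℝ} (hq0 : 0 < q) (hq1 : q < 1) {J c : ℕ} (hc : c < J) :
    qBinom q J (c + 1) * qNum q (c + 1) = qBinom q J c * qNum q (J - c) := by
  have e1 : J - c = (J - (c + 1)) + 1 := by omega
  have hf2 : qFact q (J - c) = qFact q (J - (c + 1)) * qNum q (J - c) := by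
    rw [e1, qFact_succ, ← e1]
  have n1 : qNum q (c + 1) ≠ 0 := ne_of_gt (qNum_pos hq0 hq1 (by omega))
  have n2 : qNum q (J - c) ≠ 0 := ne_of_gt (qNum_pos hq0 hq1 (by omega))
  have d1 : qFact q c ≠ 0 := ne_of_gt (qFact_pos hq0 hq1 c)
  have d2 : qFact q (J - (c + 1)) ≠ 0 := ne_of_gt (qFact_pos hq0 hq1 _)
  unfold qBinom
  rw [qFact_succ, hf2]
  field_simp

lemma balance_aux (P Zi Zb B1 B2 B3 B4 N1 N2 N3 N4 Q1 Q2 Q3 Q4 Q5 Q6 A1 A2 A3 A4 : ℝ)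
    (h1 : B1 * N1 = B2 * N2) (h2 : B3 * N3 = B4 * N4)
    (h3 : Q1 * Q3 * Q5 = Q2 * Q4 * Q6) (h4 : A1 * A3 = A2 * A4) :
    P * (A3 / Zb * B3 * Q3) * (A1 / Zi * B1 * Q1) * (Q5 * N1 * N3)
      = P * (A4 / Zb * B4 * Q4) * (A2 / Zi * B2 * Q2) * (Q6 * N2 * N4) := by
  calc P * (A3 / Zb * B3 * Q3) * (A1 / Zi * B1 * Q1) * (Q5 * N1 * N3)
      = P * (A1 * A3) * ((B1 * N1) * (B3 * N3)) * (Q1 * Q3 * Q5) / (Zi * Zb) := by ring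
    _ = P * (A2 * A4) * ((B2 * N2) * (B4 * N4)) * (Q2 * Q4 * Q6) / (Zi * Zb) := by
        rw [h1, h2, h3, h4]
    _ = P * (A4 / Zb * B4 * Q4) * (A2 / Zi * B2 * Q2) * (Q6 * N2 * N4) := by ring

/-- (Reversible product measures for ASEP(q,j) on {1,...,L}) The product measure with
marginals `marg` satisfies detailed balance for the ASEP(q,j) rates (here J = 2j). -/
theorem stmt11 (q α : ℝ) (hq0 : 0 < q) (hq1 : q < 1) (hα : 0 < α)
    (J L : ℕ) (hJ : 1 ≤ J) (η : ℕ → ℕ) (hb : ∀ k, η k ≤ J)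
    (i : ℕ) (hi : 1 ≤ i) (hiL : i + 1 ≤ L) (h1 : 1 ≤ η i) (h2 : η (i + 1) < J) :
    (∏ k ∈ Finset.Icc 1 L, marg q α J k (η k)) *
        (q ^ ((η i : ℤ) - η (i + 1) - (J + 1)) * qNum q (η i) * qNum q (J - η (i + 1)))
      = (∏ k ∈ Finset.Icc 1 L, marg q α J k (moveR η i k)) *
        (q ^ ((moveR η i i : ℤ) - moveR η i (i + 1) + (J + 1)) *
          qNum q (J - moveR η i i) * qNum q (moveR η i (i + 1))) := by
  have hqne : (q : ℝ) ≠ 0 := ne_of_gt hq0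
  have hii : i ∈ Finset.Icc 1 L := Finset.mem_Icc.mpr ⟨hi, by omega⟩
  have hii' : i + 1 ∈ (Finset.Icc 1 L).erase i :=
    Finset.mem_erase.mpr ⟨by omega, Finset.mem_Icc.mpr ⟨by omega, hiL⟩⟩
  have e1 : moveR η i i = η i - 1 := by simp [moveR]
  have e2 : moveR η i (i + 1) = η (i + 1) + 1 := by simp [moveR]
  rw [← Finset.prod_erase_mul (Finset.Icc 1 L) (fun k => marg q α J k (η k)) hii,
      ← Finset.prod_erase_mul (Finset.Icc 1 L) (fun k => marg q α J k (moveR η i k)) hii,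
      ← Finset.prod_erase_mul _ (fun k => marg q α J k (η k)) hii',
      ← Finset.prod_erase_mul _ (fun k => marg q α J k (moveR η i k)) hii']
  have hbase : (∏ k ∈ ((Finset.Icc 1 L).erase i).erase (i + 1), marg q α J k (moveR η i k))
      = ∏ k ∈ ((Finset.Icc 1 L).erase i).erase (i + 1), marg q α J k (η k) := by
    refine Finset.prod_congr rfl fun k hk => ?_
    have hk1 : k ≠ i + 1 := (Finset.mem_erase.mp hk).1
    have hk2 : k ≠ i := (Finset.mem_erase.mp (Finset.mem_erase.mp hk).2).1
    simp [moveR, hk1, hk2]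
  rw [hbase, e1, e2]
  simp only [marg]
  obtain ⟨c, hc⟩ : ∃ c, η i = c + 1 := ⟨η i - 1, by omega⟩
  rw [hc]
  simp only [Nat.add_sub_cancel]
  apply balance_aux
  · exact qBinom_succ_mul hq0 hq1 (by have := hb i; omega)
  · exact (qBinom_succ_mul hq0 hq1 h2).symm
  · rw [← zpow_add₀ hqne, ← zpow_add₀ hqne, ← zpow_add₀ hqne, ← zpow_add₀ hqne]
    congr 1
    push_cast
    ring
  · ring
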